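/- A polynomial translation surface r(u,v) = (u, v, f(u) + g(v)) with f, g polynomials is a Weingarten surface (Jacobian of (H,K) vanishes identically) if and only if it is a cylinder (f or g has degree ≤ 1) or, up to translation, a paraboloid of revolution z = a(u−u₀)² + a(v−v₀)² with a ≠ 0. -/

import Mathlib

open Polynomial

/-- The mean curvature of the translation surface `r(u,v) = (u,v,f(u)+g(v))`, `α = f'`, `β = g'`. -/
noncomputable def meanCurv (α β : ℝ → ℝ) (u v : ℝ) : ℝ :=
  ((1 + β v ^ 2) * deriv α u + (1 + α u ^ 2) * deriv β v) /
    (2 * (1 + α u ^ 2 + β v ^ 2) ^ ((3 : ℝ) / 2))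

/-- The Gaussian curvature of the translation surface. -/
noncomputable def gaussCurv (α β : ℝ → ℝ) (u v : ℝ) : ℝ :=
  deriv α u * deriv β v / (1 + α u ^ 2 + β v ^ 2) ^ 2

/-- The Jacobian `∂(H,K)/∂(u,v)` of the curvatures. -/
noncomputable def jacobianHK (α β : ℝ → ℝ) (u v : ℝ) : ℝ :=
  deriv (fun x => meanCurv α β x v) u * deriv (fun y => gaussCurv α β u y) v -
    deriv (fun y => meanCurv α β u y) v * deriv (fun x => gaussCurv α β x v) u

section WeingartenAux

open Real

lemma hasDerivAt_H (Pn Pw : ℝ[X]) (hW : ∀ x, 0 < Pw.eval x) (u : ℝ) :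
    HasDerivAt (fun x => Pn.eval x / (2 * (Pw.eval x) ^ ((3:ℝ)/2)))
      ((Pn.derivative.eval u * Pw.eval u - (3/2) * Pw.derivative.eval u * Pn.eval u) /
        (2 * (Pw.eval u) ^ ((5:ℝ)/2))) u := by
  have h1 : HasDerivAt (fun x => (Pw.eval x) ^ ((3:ℝ)/2))
      (Pw.derivative.eval u * ((3:ℝ)/2) * (Pw.eval u) ^ ((3:ℝ)/2 - 1)) u :=
    (Pw.hasDerivAt u).rpow_const (Or.inl (hW u).ne')
  have h2 := h1.const_mul (2:ℝ)
  have hd : (2 * (Pw.eval u) ^ ((3:ℝ)/2)) ≠ 0 := by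
    have := Real.rpow_pos_of_pos (hW u) ((3:ℝ)/2); positivity
  have h3 := (Pn.hasDerivAt u).div h2 hd
  refine h3.congr_deriv ?_
  set w := Pw.eval u with hwdef
  have hw : 0 < w := hW u
  have h32 : w ^ ((3:ℝ)/2 - 1) = w ^ ((1:ℝ)/2) := by norm_num
  have e1 : w ^ ((3:ℝ)/2) = w ^ ((1:ℝ)/2) * w := by
    rw [show (3:ℝ)/2 = 1/2 + 1 by norm_num, Real.rpow_add hw, Real.rpow_one]
  have e2 : w ^ ((5:ℝ)/2) = w ^ ((1:ℝ)/2) * w^2 := by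
    rw [show (5:ℝ)/2 = 1/2 + 2 by norm_num, Real.rpow_add hw,
      show ((2:ℝ)) = ((2:ℕ):ℝ) by norm_num, Real.rpow_natCast]
  have hs : (0:ℝ) < w ^ ((1:ℝ)/2) := Real.rpow_pos_of_pos hw _
  rw [h32, e1, e2]
  field_simp

lemma hasDerivAt_K (Pq Pw : ℝ[X]) (hW : ∀ x, 0 < Pw.eval x) (u : ℝ) :
    HasDerivAt (fun x => Pq.eval x / (Pw.eval x) ^ 2)
      ((Pq.derivative.eval u * Pw.eval u - 2 * Pw.derivative.eval u * Pq.eval u) /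
        (Pw.eval u) ^ 3) u := by
  have h2 := (Pw.hasDerivAt u).pow 2
  have hd : (Pw.eval u) ^ 2 ≠ 0 := pow_ne_zero _ (hW u).ne'
  have h3 := (Pq.hasDerivAt u).div h2 hd
  refine h3.congr_deriv ?_
  have hw : Pw.eval u ≠ 0 := (hW u).ne'
  simp only [Pi.pow_apply]
  field_simp
  ring

lemma deriv_meanCurv (f g : ℝ[X]) (u v : ℝ) :
    deriv (fun x => meanCurv (fun t => (derivative f).eval t)
        (fun t => (derivative g).eval t) x v) u
      = (((1 + (derivative g).eval v ^ 2) * (derivative (derivative (derivative f))).eval u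
           + 2 * (derivative f).eval u * (derivative (derivative f)).eval u
              * (derivative (derivative g)).eval v)
          * (1 + (derivative f).eval u ^ 2 + (derivative g).eval v ^ 2)
         - (3/2) * (2 * (derivative f).eval u * (derivative (derivative f)).eval u)
           * ((1 + (derivative g).eval v ^ 2) * (derivative (derivative f)).eval u
              + (1 + (derivative f).eval u ^ 2) * (derivative (derivative g)).eval v))
        / (2 * (1 + (derivative f).eval u ^ 2 + (derivative g).eval v ^ 2) ^ ((5:ℝ)/2)) := by
  set b := (derivative g).eval v with hb
  set b2 := (derivative (derivative g)).eval v with hb2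
  set Pn : ℝ[X] := (C 1 + C b ^ 2) * (derivative (derivative f))
      + (C 1 + (derivative f)^2) * C b2 with hPn
  set Pw : ℝ[X] := C 1 + (derivative f)^2 + C b ^ 2 with hPw
  have hWpos : ∀ x, 0 < Pw.eval x := by
    intro x; rw [hPw]; simp only [eval_add, eval_C, eval_pow, eval_one]; positivity
  have hfun : (fun x => meanCurv (fun t => (derivative f).eval t)
      (fun t => (derivative g).eval t) x v)
      = fun x => Pn.eval x / (2 * (Pw.eval x) ^ ((3:ℝ)/2)) := by
    funext x
    simp only [meanCurv, Polynomial.deriv, hPn, hPw, eval_add, eval_mul, eval_C, eval_pow,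
      eval_one, ← hb, ← hb2]
  rw [hfun, (hasDerivAt_H Pn Pw hWpos u).deriv]
  have hPn' : derivative Pn = (C 1 + C b ^ 2) * (derivative (derivative (derivative f)))
      + (C 2 * (derivative f) * (derivative (derivative f))) * C b2 := by
    rw [hPn]
    simp only [derivative_add, derivative_mul, derivative_pow, derivative_C, derivative_one]
    ring
  have hPw' : derivative Pw = C 2 * (derivative f) * (derivative (derivative f)) := by
    rw [hPw]
    simp only [derivative_add, derivative_pow, derivative_C, derivative_one]
    ring
  rw [hPn', hPw', hPn, hPw]
  simp only [eval_add, eval_mul, eval_C, eval_pow, eval_one, eval_ofNat]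


lemma deriv_gaussCurv (f g : ℝ[X]) (u v : ℝ) :
    deriv (fun x => gaussCurv (fun t => (derivative f).eval t)
        (fun t => (derivative g).eval t) x v) u
      = ((derivative (derivative (derivative f))).eval u * (derivative (derivative g)).eval v
          * (1 + (derivative f).eval u ^ 2 + (derivative g).eval v ^ 2)
         - 2 * (2 * (derivative f).eval u * (derivative (derivative f)).eval u)
            * ((derivative (derivative f)).eval u * (derivative (derivative g)).eval v))
        / (1 + (derivative f).eval u ^ 2 + (derivative g).eval v ^ 2) ^ 3 := by
  set b := (derivative g).eval v with hb
  set b2 := (derivative (derivative g)).eval v with hb2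
  set Pq : ℝ[X] := (derivative (derivative f)) * C b2 with hPq
  set Pw : ℝ[X] := C 1 + (derivative f)^2 + C b ^ 2 with hPw
  have hWpos : ∀ x, 0 < Pw.eval x := by
    intro x; rw [hPw]; simp only [eval_add, eval_C, eval_pow, eval_one]; positivity
  have hfun : (fun x => gaussCurv (fun t => (derivative f).eval t)
      (fun t => (derivative g).eval t) x v)
      = fun x => Pq.eval x / (Pw.eval x) ^ 2 := by
    funext x
    simp only [gaussCurv, Polynomial.deriv, hPq, hPw, eval_add, eval_mul, eval_C, eval_pow,
      eval_one, ← hb, ← hb2]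
  rw [hfun, (hasDerivAt_K Pq Pw hWpos u).deriv]
  have hPq' : derivative Pq = (derivative (derivative (derivative f))) * C b2 := by
    rw [hPq]; simp
  have hPw' : derivative Pw = C 2 * (derivative f) * (derivative (derivative f)) := by
    rw [hPw]
    simp only [derivative_add, derivative_pow, derivative_C, derivative_one]
    ring
  rw [hPq', hPw', hPq, hPw]
  simp only [eval_add, eval_mul, eval_C, eval_pow, eval_one, eval_ofNat]


/-- The polynomial expression whose vanishing is equivalent to the Weingarten condition. -/
noncomputable def Pexpr (A A2 A3 B B2 B3 : ℝ) : ℝ :=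
  (((1+B^2)*A3 + 2*A*A2*B2) * (1+A^2+B^2)
      - (3/2)*(2*A*A2)*((1+B^2)*A2 + (1+A^2)*B2))
    * (B3*A2*(1+A^2+B^2) - 2*(2*B*B2)*(B2*A2))
  - (((1+A^2)*B3 + 2*B*B2*A2) * (1+A^2+B^2)
      - (3/2)*(2*B*B2)*((1+A^2)*B2 + (1+B^2)*A2))
    * (A3*B2*(1+A^2+B^2) - 2*(2*A*A2)*(A2*B2))

lemma jac_eq (f g : ℝ[X]) (u v : ℝ) :
    jacobianHK (fun x => (derivative f).eval x) (fun y => (derivative g).eval y) u v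
      = Pexpr ((derivative f).eval u) ((derivative (derivative f)).eval u)
          ((derivative (derivative (derivative f))).eval u)
          ((derivative g).eval v) ((derivative (derivative g)).eval v)
          ((derivative (derivative (derivative g))).eval v)
        / (2 * (1 + (derivative f).eval u ^ 2 + (derivative g).eval v ^ 2) ^ ((11:ℝ)/2)) := by
  have hsymH : (fun y => meanCurv (fun x => (derivative f).eval x)
        (fun y => (derivative g).eval y) u y)
      = fun y => meanCurv (fun t => (derivative g).eval t)
          (fun t => (derivative f).eval t) y u := by
    funext y
    simp only [meanCurv]
    rw [show (1:ℝ) + (derivative f).eval u ^2 + (derivative g).eval y ^2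
        = 1 + (derivative g).eval y ^2 + (derivative f).eval u ^2 by ring]
    ring
  have hsymK : (fun y => gaussCurv (fun x => (derivative f).eval x)
        (fun y => (derivative g).eval y) u y)
      = fun y => gaussCurv (fun t => (derivative g).eval t)
          (fun t => (derivative f).eval t) y u := by
    funext y
    simp only [gaussCurv]
    rw [show (1:ℝ) + (derivative f).eval u ^2 + (derivative g).eval y ^2
        = 1 + (derivative g).eval y ^2 + (derivative f).eval u ^2 by ring]
    ring
  unfold jacobianHK
  rw [hsymH, hsymK, deriv_meanCurv f g u v, deriv_meanCurv g f v u,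
      deriv_gaussCurv f g u v, deriv_gaussCurv g f v u]
  rw [show (1:ℝ) + (derivative g).eval v ^2 + (derivative f).eval u ^2
      = 1 + (derivative f).eval u ^2 + (derivative g).eval v ^2 by ring]
  set A := (derivative f).eval u
  set A2 := (derivative (derivative f)).eval u
  set A3 := (derivative (derivative (derivative f))).eval u
  set B := (derivative g).eval v
  set B2 := (derivative (derivative g)).eval v
  set B3 := (derivative (derivative (derivative g))).eval v
  set W := 1 + A^2 + B^2 with hWdef
  have hW : (0:ℝ) < W := by rw [hWdef]; positivity
  have hden : (2*W^((5:ℝ)/2))*W^(3:ℕ) = 2*W^((11:ℝ)/2) := by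
    rw [mul_assoc, show (W:ℝ)^(3:ℕ) = W^((3:ℝ)) by
        rw [← Real.rpow_natCast W 3]; norm_num,
      ← Real.rpow_add hW]
    norm_num
  rw [div_mul_div_comm, div_mul_div_comm, hden, div_sub_div_same]
  congr 1


private lemma nd_add {p q : ℝ[X]} {a : ℕ} (hp : p.natDegree ≤ a) (hq : q.natDegree ≤ a) :
    (p + q).natDegree ≤ a := (natDegree_add_le_of_le hp hq).trans (by simp)

private lemma nd_sub {p q : ℝ[X]} {a : ℕ} (hp : p.natDegree ≤ a) (hq : q.natDegree ≤ a) :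
    (p - q).natDegree ≤ a := (natDegree_sub_le_of_le hp hq).trans (by simp)

private lemma nd_mul {p q : ℝ[X]} {a b c : ℕ} (hp : p.natDegree ≤ a) (hq : q.natDegree ≤ b)
    (h : a + b ≤ c) : (p * q).natDegree ≤ c := (natDegree_mul_le_of_le hp hq).trans h

private lemma nd_C (x : ℝ) {a : ℕ} : (C x).natDegree ≤ a := (natDegree_C x).le.trans (Nat.zero_le a)

private lemma nd_Cmul {p : ℝ[X]} {a : ℕ} (x : ℝ) (hp : p.natDegree ≤ a) :
    (C x * p).natDegree ≤ a := (natDegree_C_mul_le x p).trans hp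

private lemma nd_mulC {p : ℝ[X]} {a : ℕ} (x : ℝ) (hp : p.natDegree ≤ a) :
    (p * C x).natDegree ≤ a := (natDegree_mul_C_le p x).trans hp

private lemma cf_mul {p q : ℝ[X]} {a b c : ℕ} (hp : p.natDegree ≤ a) (hq : q.natDegree ≤ b)
    (h : c = a + b) : (p * q).coeff c = p.coeff a * q.coeff b := by
  subst h; exact coeff_mul_add_eq_of_natDegree_le hp hq

noncomputable def d1 (f : ℝ[X]) : ℝ[X] := derivative f
noncomputable def d2 (f : ℝ[X]) : ℝ[X] := derivative (derivative f)
noncomputable def d3 (f : ℝ[X]) : ℝ[X] := derivative (derivative (derivative f))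

noncomputable def Wq (f : ℝ[X]) (b : ℝ) : ℝ[X] := C (1+b^2) + (d1 f)^2
noncomputable def Nq (f : ℝ[X]) (b b2 : ℝ) : ℝ[X] :=
  C (1+b^2) * d2 f + (C 1 + (d1 f)^2) * C b2
noncomputable def F1q (f : ℝ[X]) (b b2 : ℝ) : ℝ[X] :=
  (C (1+b^2) * d3 f + C (2*b2) * (d1 f * d2 f)) * Wq f b
    - C 3 * (d1 f * (d2 f * Nq f b b2))
noncomputable def G1q (f : ℝ[X]) (b b2 b3 : ℝ) : ℝ[X] :=
  d2 f * (C b3 * Wq f b - C (4*b*b2^2))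
noncomputable def F2q (f : ℝ[X]) (b b2 b3 : ℝ) : ℝ[X] :=
  (C (2*b*b2) * d2 f + (C 1 + (d1 f)^2) * C b3) * Wq f b - C (3*b*b2) * Nq f b b2
noncomputable def G2q (f : ℝ[X]) (b b2 : ℝ) : ℝ[X] :=
  C b2 * (d3 f * Wq f b - C 4 * (d1 f * (d2 f * d2 f)))
noncomputable def Qq (f : ℝ[X]) (b b2 b3 : ℝ) : ℝ[X] :=
  F1q f b b2 * G1q f b b2 b3 - F2q f b b2 b3 * G2q f b b2

variable {f : ℝ[X]} {k : ℕ}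

private lemma h1d (hf : f.natDegree ≤ k + 2) : (d1 f).natDegree ≤ k + 1 := by
  have := natDegree_derivative_le f; unfold d1; omega

private lemma h2d (hf : f.natDegree ≤ k + 2) : (d2 f).natDegree ≤ k := by
  have h := natDegree_derivative_le (derivative f)
  have := h1d hf; unfold d1 at this; unfold d2; omega

private lemma h3d (hf : f.natDegree ≤ k + 2) : (d3 f).natDegree ≤ k := by
  have h := natDegree_derivative_le (derivative (derivative f))
  have := h2d hf; unfold d2 at this; unfold d3; omega

private lemma h2c : (d2 f).coeff k = (d1 f).coeff (k+1) * ((k:ℝ)+1) := by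
  have := coeff_derivative (d1 f) k
  simpa [d2, d1] using this

private lemma hsq (hf : f.natDegree ≤ k + 2) : ((d1 f)^2).natDegree ≤ 2*k+2 := by
  rw [pow_two (d1 f)]; exact nd_mul (h1d hf) (h1d hf) (by omega)

private lemma hsqc (hf : f.natDegree ≤ k + 2) :
    ((d1 f)^2).coeff (2*k+2) = ((d1 f).coeff (k+1))^2 := by
  rw [pow_two (d1 f), cf_mul (h1d hf) (h1d hf) (by omega : 2*k+2 = (k+1)+(k+1)),
    pow_two]

private lemma hWd (hf : f.natDegree ≤ k + 2) (b : ℝ) : (Wq f b).natDegree ≤ 2*k+2 :=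
  nd_add (nd_C _) (hsq hf)

private lemma hWc (hf : f.natDegree ≤ k + 2) (b : ℝ) :
    (Wq f b).coeff (2*k+2) = ((d1 f).coeff (k+1))^2 := by
  rw [Wq, coeff_add, coeff_C, if_neg (by omega : ¬(2*k+2 = 0)), hsqc hf, zero_add]

private lemma hNd (hf : f.natDegree ≤ k + 2) (b b2 : ℝ) : (Nq f b b2).natDegree ≤ 2*k+2 :=
  nd_add (nd_Cmul _ ((h2d hf).trans (by omega)))
    (nd_mulC _ (nd_add (nd_C _) (hsq hf)))

private lemma hNc (hf : f.natDegree ≤ k + 2) (b b2 : ℝ) :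
    (Nq f b b2).coeff (2*k+2) = ((d1 f).coeff (k+1))^2 * b2 := by
  rw [Nq, coeff_add, coeff_C_mul, coeff_mul_C,
    coeff_eq_zero_of_natDegree_lt ((h2d hf).trans_lt (by omega)),
    coeff_add, coeff_C, if_neg (by omega : ¬(2*k+2 = 0)), hsqc hf]
  ring

private lemma hNud (hf : f.natDegree ≤ k + 2) (b b2 : ℝ) :
    (C (1+b^2) * d3 f + C (2*b2) * (d1 f * d2 f)).natDegree ≤ 2*k+1 :=
  nd_add (nd_Cmul _ ((h3d hf).trans (by omega)))
    (nd_Cmul _ (nd_mul (h1d hf) (h2d hf) (by omega)))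

private lemma hF1d (hf : f.natDegree ≤ k + 2) (b b2 : ℝ) :
    (F1q f b b2).natDegree ≤ 4*k+3 :=
  nd_sub (nd_mul (hNud hf b b2) (hWd hf b) (by omega))
    (nd_Cmul _ (show (d1 f * (d2 f * Nq f b b2)).natDegree ≤ 4*k+3 from
      nd_mul (h1d hf) (show (d2 f * Nq f b b2).natDegree ≤ 3*k+2 from
        nd_mul (h2d hf) (hNd hf b b2) (by omega)) (by omega)))

private lemma hF1c (hf : f.natDegree ≤ k + 2) (b b2 : ℝ) :
    (F1q f b b2).coeff (4*k+3) = -((k:ℝ)+1) * ((d1 f).coeff (k+1))^4 * b2 := by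
  have hNuc : (C (1+b^2) * d3 f + C (2*b2) * (d1 f * d2 f)).coeff (2*k+1)
      = 2*b2 * ((d1 f).coeff (k+1) * ((d1 f).coeff (k+1) * ((k:ℝ)+1))) := by
    rw [coeff_add, coeff_C_mul, coeff_C_mul,
      coeff_eq_zero_of_natDegree_lt ((h3d hf).trans_lt (by omega)),
      cf_mul (h1d hf) (h2d hf) (by omega : 2*k+1 = (k+1)+k), h2c]
    ring
  have e1 : ((C (1+b^2) * d3 f + C (2*b2) * (d1 f * d2 f)) * Wq f b).coeff (4*k+3)
      = 2*b2 * ((d1 f).coeff (k+1) * ((d1 f).coeff (k+1) * ((k:ℝ)+1)))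
          * ((d1 f).coeff (k+1))^2 := by
    rw [cf_mul (hNud hf b b2) (hWd hf b) (by omega : 4*k+3 = (2*k+1)+(2*k+2)), hNuc,
      hWc hf b]
  have e2 : (d1 f * (d2 f * Nq f b b2)).coeff (4*k+3)
      = (d1 f).coeff (k+1) * ((d1 f).coeff (k+1) * ((k:ℝ)+1)
          * (((d1 f).coeff (k+1))^2 * b2)) := by
    rw [cf_mul (h1d hf)
        (show (d2 f * Nq f b b2).natDegree ≤ 3*k+2 from
          nd_mul (h2d hf) (hNd hf b b2) (by omega))
        (by omega : 4*k+3 = (k+1)+(3*k+2)),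
      cf_mul (h2d hf) (hNd hf b b2) (by omega : 3*k+2 = k+(2*k+2)), h2c, hNc hf b b2]
  rw [F1q, coeff_sub, e1, coeff_C_mul, e2]
  ring

private lemma hG1d (hf : f.natDegree ≤ k + 2) (b b2 b3 : ℝ) :
    (G1q f b b2 b3).natDegree ≤ 3*k+2 :=
  nd_mul (h2d hf) (nd_sub (nd_Cmul _ (hWd hf b)) (nd_C _)) (by omega)

private lemma hG1c (hf : f.natDegree ≤ k + 2) (b b2 b3 : ℝ) :
    (G1q f b b2 b3).coeff (3*k+2) = ((k:ℝ)+1) * ((d1 f).coeff (k+1))^3 * b3 := by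
  have e1 : (C b3 * Wq f b - C (4*b*b2^2)).coeff (2*k+2)
      = b3 * ((d1 f).coeff (k+1))^2 := by
    rw [coeff_sub, coeff_C_mul, hWc hf b, coeff_C, if_neg (by omega : ¬(2*k+2 = 0)),
      sub_zero]
  rw [G1q, cf_mul (h2d hf) (nd_sub (nd_Cmul _ (hWd hf b)) (nd_C _))
      (by omega : 3*k+2 = k+(2*k+2)), e1, h2c]
  ring

private lemma hF2d (hf : f.natDegree ≤ k + 2) (b b2 b3 : ℝ) :
    (F2q f b b2 b3).natDegree ≤ 4*k+4 :=
  nd_sub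
    (nd_mul (nd_add (nd_Cmul _ ((h2d hf).trans (by omega)))
        (nd_mulC _ (nd_add (nd_C _) (hsq hf))))
      (hWd hf b) (by omega))
    (nd_Cmul _ ((hNd hf b b2).trans (by omega)))

private lemma hF2c (hf : f.natDegree ≤ k + 2) (b b2 b3 : ℝ) :
    (F2q f b b2 b3).coeff (4*k+4) = ((d1 f).coeff (k+1))^4 * b3 := by
  have hNvd : (C (2*b*b2) * d2 f + (C 1 + (d1 f)^2) * C b3).natDegree ≤ 2*k+2 :=
    nd_add (nd_Cmul _ ((h2d hf).trans (by omega)))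
      (nd_mulC _ (nd_add (nd_C _) (hsq hf)))
  have hNvc : (C (2*b*b2) * d2 f + (C 1 + (d1 f)^2) * C b3).coeff (2*k+2)
      = ((d1 f).coeff (k+1))^2 * b3 := by
    rw [coeff_add, coeff_C_mul,
      coeff_eq_zero_of_natDegree_lt ((h2d hf).trans_lt (by omega)),
      coeff_mul_C, coeff_add, coeff_C, if_neg (by omega : ¬(2*k+2 = 0)), hsqc hf]
    ring
  rw [F2q, coeff_sub,
    cf_mul hNvd (hWd hf b) (by omega : 4*k+4 = (2*k+2)+(2*k+2)), hNvc, hWc hf b,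
    coeff_C_mul, coeff_eq_zero_of_natDegree_lt ((hNd hf b b2).trans_lt (by omega))]
  ring

private lemma hd30 (hf : f.natDegree ≤ 0 + 2) : d3 f = 0 := by
  have h2 : (d2 f).natDegree ≤ 0 := h2d hf
  have h := eq_C_of_natDegree_le_zero h2
  show derivative (d2 f) = 0
  rw [h, derivative_C]

private lemma hd3Wd (hf : f.natDegree ≤ k + 2) (b : ℝ) :
    (d3 f * Wq f b).natDegree ≤ 3*k+1 := by
  rcases Nat.eq_zero_or_pos k with hk | hk
  · subst hk
    rw [hd30 hf, zero_mul]
    simp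
  · obtain ⟨j, rfl⟩ : ∃ j, k = j+1 := ⟨k-1, by omega⟩
    have h3d' : (d3 f).natDegree ≤ j := by
      have h := natDegree_derivative_le (d2 f)
      have := h2d hf
      show (derivative (d2 f)).natDegree ≤ j
      omega
    exact nd_mul h3d' (hWd hf b) (by omega)

private lemma hd3Wc (hf : f.natDegree ≤ k + 2) (b : ℝ) :
    (d3 f * Wq f b).coeff (3*k+1)
      = (d1 f).coeff (k+1) * ((k:ℝ)+1) * (k:ℝ) * ((d1 f).coeff (k+1))^2 := by
  rcases Nat.eq_zero_or_pos k with hk | hk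
  · subst hk
    rw [hd30 hf, zero_mul]
    norm_num
  · obtain ⟨j, rfl⟩ : ∃ j, k = j+1 := ⟨k-1, by omega⟩
    have h3d' : (d3 f).natDegree ≤ j := by
      have h := natDegree_derivative_le (d2 f)
      have := h2d hf
      show (derivative (d2 f)).natDegree ≤ j
      omega
    have e3 : (d3 f).coeff j = (d1 f).coeff (j+1+1) * ((j:ℝ)+1+1) * ((j:ℝ)+1) := by
      have h1 : (d3 f).coeff j = (d2 f).coeff (j+1) * ((j:ℝ)+1) := by
        have := coeff_derivative (d2 f) j
        simpa [d3, d2] using this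
      rw [h1, h2c]
      push_cast
      ring
    rw [cf_mul h3d' (hWd hf b) (by omega : 3*(j+1)+1 = j+(2*(j+1)+2)), hWc hf b, e3]
    push_cast
    ring

private lemma hG2d (hf : f.natDegree ≤ k + 2) (b b2 : ℝ) :
    (G2q f b b2).natDegree ≤ 3*k+1 :=
  nd_Cmul _ (nd_sub (hd3Wd hf b)
    (nd_Cmul _ (show (d1 f * (d2 f * d2 f)).natDegree ≤ 3*k+1 from
      nd_mul (h1d hf) (show (d2 f * d2 f).natDegree ≤ 2*k from
        nd_mul (h2d hf) (h2d hf) (by omega)) (by omega))))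

private lemma hG2c (hf : f.natDegree ≤ k + 2) (b b2 : ℝ) :
    (G2q f b b2).coeff (3*k+1)
      = b2 * (((d1 f).coeff (k+1))^3 * (((k:ℝ)+1)*(k:ℝ) - 4*((k:ℝ)+1)^2)) := by
  have e4 : (d1 f * (d2 f * d2 f)).coeff (3*k+1)
      = (d1 f).coeff (k+1) * ((d1 f).coeff (k+1) * ((k:ℝ)+1)
          * ((d1 f).coeff (k+1) * ((k:ℝ)+1))) := by
    rw [cf_mul (h1d hf)
        (show (d2 f * d2 f).natDegree ≤ 2*k from nd_mul (h2d hf) (h2d hf) (by omega))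
        (by omega : 3*k+1 = (k+1)+(2*k)),
      cf_mul (h2d hf) (h2d hf) (by omega : 2*k = k+k), h2c]
  rw [G2q, coeff_C_mul, coeff_sub, hd3Wc hf b, coeff_C_mul, e4]
  ring

lemma hQc (hf : f.natDegree ≤ k + 2) (b b2 b3 : ℝ) :
    (Qq f b b2 b3).coeff (7*k+5)
      = ((k:ℝ)+1)*(2*(k:ℝ)+3) * ((d1 f).coeff (k+1))^7 * (b2*b3) := by
  rw [Qq, coeff_sub,
    cf_mul (hF1d hf b b2) (hG1d hf b b2 b3) (by omega : 7*k+5 = (4*k+3)+(3*k+2)),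
    cf_mul (hF2d hf b b2 b3) (hG2d hf b b2) (by omega : 7*k+5 = (4*k+4)+(3*k+1)),
    hF1c hf b b2, hG1c hf b b2 b3, hF2c hf b b2 b3, hG2c hf b b2]
  ring


lemma Qq_eval (f : ℝ[X]) (b b2 b3 : ℝ) (u : ℝ) :
    (Qq f b b2 b3).eval u
      = Pexpr ((d1 f).eval u) ((d2 f).eval u) ((d3 f).eval u) b b2 b3 := by
  simp only [Qq, F1q, G1q, F2q, G2q, Wq, Nq, Pexpr, eval_add, eval_mul, eval_sub,
    eval_pow, eval_C, eval_one]
  ring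

lemma Pexpr_anti (A A2 A3 B B2 B3 : ℝ) :
    Pexpr B B2 B3 A A2 A3 = -Pexpr A A2 A3 B B2 B3 := by
  simp only [Pexpr]; ring

/-- Key degree lemma: if the Weingarten polynomial identity holds and both degrees
are at least 2, then `g` is a quadratic. -/
lemma key_deg (f g : ℝ[X]) (hf : 2 ≤ f.natDegree) (hg : 2 ≤ g.natDegree)
    (h : ∀ u v : ℝ, Pexpr ((derivative f).eval u)
      ((derivative (derivative f)).eval u)
      ((derivative (derivative (derivative f))).eval u)
      ((derivative g).eval v) ((derivative (derivative g)).eval v)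
      ((derivative (derivative (derivative g))).eval v) = 0) :
    g.natDegree = 2 := by
  obtain ⟨k, hk⟩ : ∃ k, f.natDegree = k + 2 := ⟨f.natDegree - 2, by omega⟩
  have hfle : f.natDegree ≤ k + 2 := le_of_eq hk
  have hl : (d1 f).coeff (k+1) ≠ 0 := by
    show (derivative f).coeff (k+1) ≠ 0
    rw [coeff_derivative]
    apply mul_ne_zero
    · rw [show k+1+1 = f.natDegree from by omega, ← leadingCoeff]
      exact leadingCoeff_ne_zero.mpr (ne_zero_of_natDegree_gt (n := 0) (by omega))
    · positivity
  have hQ0 : ∀ v : ℝ, Qq f ((d1 g).eval v) ((d2 g).eval v) ((d3 g).eval v) = 0 := by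
    intro v
    apply Polynomial.funext
    intro u
    rw [Qq_eval, eval_zero]
    simp only [d1, d2, d3]
    exact h u v
  have hbb : ∀ v : ℝ, (d2 g).eval v * (d3 g).eval v = 0 := by
    intro v
    have hc : (Qq f ((d1 g).eval v) ((d2 g).eval v) ((d3 g).eval v)).coeff (7*k+5)
        = 0 := by rw [hQ0 v]; simp
    rw [hQc hfle] at hc
    have hcne : ((k:ℝ)+1)*(2*(k:ℝ)+3) * ((d1 f).coeff (k+1))^7 ≠ 0 :=
      mul_ne_zero (mul_ne_zero (by positivity) (by positivity)) (pow_ne_zero _ hl)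
    exact (mul_eq_zero.mp hc).resolve_left hcne
  have hprod : d2 g * d3 g = 0 := by
    apply Polynomial.funext
    intro v
    rw [eval_mul, eval_zero]
    exact hbb v
  have hd2ne : d2 g ≠ 0 := by
    obtain ⟨j, hj⟩ : ∃ j, g.natDegree = j + 2 := ⟨g.natDegree - 2, by omega⟩
    intro h0
    have e : (d2 g).coeff j = (g.coeff (j+2) * ((j:ℝ)+2)) * ((j:ℝ)+1) := by
      show (derivative (derivative g)).coeff j = _
      rw [coeff_derivative, coeff_derivative]
      push_cast
      ring
    have hgc : g.coeff (j+2) ≠ 0 := by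
      rw [show j+2 = g.natDegree from hj.symm, ← leadingCoeff]
      exact leadingCoeff_ne_zero.mpr (ne_zero_of_natDegree_gt (n := 0) (by omega))
    rw [h0, coeff_zero] at e
    exact (mul_ne_zero (mul_ne_zero hgc (by positivity)) (by positivity)) e.symm
  have hd3 : d3 g = 0 := by
    rcases mul_eq_zero.mp hprod with h' | h'
    · exact absurd h' hd2ne
    · exact h'
  have h2deg : (d2 g).natDegree = 0 :=
    natDegree_eq_zero_of_derivative_eq_zero hd3
  by_contra hne
  have h3 : 3 ≤ g.natDegree := by omega
  obtain ⟨j, hj⟩ : ∃ j, g.natDegree = j + 3 := ⟨g.natDegree - 3, by omega⟩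
  have e : (d2 g).coeff (j+1) = (g.coeff (j+3) * ((j:ℝ)+3)) * ((j:ℝ)+2) := by
    show (derivative (derivative g)).coeff (j+1) = _
    rw [coeff_derivative, coeff_derivative]
    push_cast
    ring
  have hz : (d2 g).coeff (j+1) = 0 := coeff_eq_zero_of_natDegree_lt (by omega)
  have hgc : g.coeff (j+3) ≠ 0 := by
    rw [show j+3 = g.natDegree from hj.symm, ← leadingCoeff]
    exact leadingCoeff_ne_zero.mpr (ne_zero_of_natDegree_gt (n := 0) (by omega))
  rw [hz] at e
  exact (mul_ne_zero (mul_ne_zero hgc (by positivity)) (by positivity)) e.symm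

lemma quad_eval (f : ℝ[X]) (h2 : f.natDegree = 2) (x : ℝ) :
    f.eval x = f.coeff 0 + f.coeff 1 * x + f.coeff 2 * x^2 := by
  rw [eval_eq_sum_range' (n := 3) (by omega)]
  simp [Finset.sum_range_succ]
  try ring

lemma d1_eval (f : ℝ[X]) (h2 : f.natDegree = 2) (x : ℝ) :
    (d1 f).eval x = f.coeff 1 + 2 * f.coeff 2 * x := by
  have hd : (d1 f).natDegree ≤ 1 := by
    have := natDegree_derivative_le f
    show (derivative f).natDegree ≤ 1
    omega
  have e1 : (d1 f).coeff 1 = f.coeff 2 * 2 := by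
    show (derivative f).coeff 1 = _
    rw [coeff_derivative]; norm_num
  have e0 : (d1 f).coeff 0 = f.coeff 1 := by
    show (derivative f).coeff 0 = _
    rw [coeff_derivative]; norm_num
  conv_lhs => rw [eq_X_add_C_of_natDegree_le_one hd]
  simp [e1, e0]
  try ring

lemma d2_eval (f : ℝ[X]) (h2 : f.natDegree = 2) (x : ℝ) :
    (d2 f).eval x = 2 * f.coeff 2 := by
  have hd : (d2 f).natDegree ≤ 0 := h2d (k := 0) (le_of_eq h2)
  have e0 : (d2 f).coeff 0 = f.coeff 2 * 2 := by
    show (derivative (derivative f)).coeff 0 = _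
    rw [coeff_derivative, coeff_derivative]; norm_num
  conv_lhs => rw [eq_C_of_natDegree_le_zero hd]
  simp [e0]
  try ring

lemma jac_iff (f g : ℝ[X]) (u v : ℝ) :
    jacobianHK (fun x => (derivative f).eval x) (fun y => (derivative g).eval y) u v = 0
      ↔ Pexpr ((derivative f).eval u) ((derivative (derivative f)).eval u)
          ((derivative (derivative (derivative f))).eval u)
          ((derivative g).eval v) ((derivative (derivative g)).eval v)
          ((derivative (derivative (derivative g))).eval v) = 0 := by
  have h0 : (0:ℝ) < 1 + (derivative f).eval u ^ 2 + (derivative g).eval v ^ 2 := by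
    positivity
  have hden : (2 * (1 + (derivative f).eval u ^ 2 + (derivative g).eval v ^ 2)
      ^ ((11:ℝ)/2)) ≠ 0 := by
    have := Real.rpow_pos_of_pos h0 ((11:ℝ)/2)
    positivity
  rw [jac_eq f g u v, _root_.div_eq_zero_iff, or_iff_left hden]

end WeingartenAux

/-- A polynomial translation surface `r(u,v) = (u, v, f(u) + g(v))` is a Weingarten surface
iff it is a cylinder (`f` or `g` has degree `≤ 1`) or, up to translation, a paraboloid of
revolution `z = a(u−u₀)² + a(v−v₀)²` with `a ≠ 0`. -/
theorem stmt_10 (f g : Polynomial ℝ) :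
    (∀ u v : ℝ,
        jacobianHK (fun x => f.derivative.eval x) (fun y => g.derivative.eval y) u v = 0) ↔
      (f.natDegree ≤ 1 ∨ g.natDegree ≤ 1 ∨
        ∃ (a u₀ v₀ c₁ c₂ : ℝ), a ≠ 0 ∧
          (∀ u : ℝ, f.eval u = a * (u - u₀) ^ 2 + c₁) ∧
          (∀ v : ℝ, g.eval v = a * (v - v₀) ^ 2 + c₂)) := by
  constructor
  · intro h
    by_cases hf1 : f.natDegree ≤ 1
    · exact Or.inl hf1
    by_cases hg1 : g.natDegree ≤ 1
    · exact Or.inr (Or.inl hg1)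
    refine Or.inr (Or.inr ?_)
    have hf : 2 ≤ f.natDegree := by omega
    have hg : 2 ≤ g.natDegree := by omega
    have hP : ∀ u v : ℝ, Pexpr ((derivative f).eval u)
        ((derivative (derivative f)).eval u)
        ((derivative (derivative (derivative f))).eval u)
        ((derivative g).eval v) ((derivative (derivative g)).eval v)
        ((derivative (derivative (derivative g))).eval v) = 0 :=
      fun u v => (jac_iff f g u v).mp (h u v)
    have hg2 : g.natDegree = 2 := key_deg f g hf hg hP
    have hf2 : f.natDegree = 2 := by
      refine key_deg g f hg hf ?_
      intro u v
      rw [Pexpr_anti, hP v u, neg_zero]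
    set p1 := f.coeff 1 with hp1d
    set p2 := f.coeff 2 with hp2d
    set q1 := g.coeff 1 with hq1d
    set q2 := g.coeff 2 with hq2d
    have hp2 : p2 ≠ 0 := by
      rw [hp2d, show (2:ℕ) = f.natDegree from hf2.symm, ← leadingCoeff]
      exact leadingCoeff_ne_zero.mpr (ne_zero_of_natDegree_gt (n := 0) (by omega))
    have hq2 : q2 ≠ 0 := by
      rw [hq2d, show (2:ℕ) = g.natDegree from hg2.symm, ← leadingCoeff]
      exact leadingCoeff_ne_zero.mpr (ne_zero_of_natDegree_gt (n := 0) (by omega))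
    have hd3f : d3 f = 0 := hd30 (le_of_eq hf2)
    have hd3g : d3 g = 0 := hd30 (le_of_eq hg2)
    -- evaluate at the point where f' = 1, g' = 1
    have hpq : p2 = q2 := by
      set u1 : ℝ := (1 - p1) / (2*p2) with hu1
      set v1 : ℝ := (1 - q1) / (2*q2) with hv1
      have hA : (derivative f).eval u1 = 1 := by
        have := d1_eval f hf2 u1
        simp only [d1] at this
        rw [this, hu1]
        field_simp
        rw [← hp1d, ← hp2d]
        ring
      have hB : (derivative g).eval v1 = 1 := by
        have := d1_eval g hg2 v1
        simp only [d1] at this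
        rw [this, hv1]
        field_simp
        rw [← hq1d, ← hq2d]
        ring
      have hA2 : (derivative (derivative f)).eval u1 = 2*p2 := by
        have := d2_eval f hf2 u1
        simp only [d2] at this
        rw [this]
      have hB2 : (derivative (derivative g)).eval v1 = 2*q2 := by
        have := d2_eval g hg2 v1
        simp only [d2] at this
        rw [this]
      have hA3 : (derivative (derivative (derivative f))).eval u1 = 0 := by
        have : d3 f = 0 := hd3f
        simp only [d3] at this
        rw [this, eval_zero]
      have hB3 : (derivative (derivative (derivative g))).eval v1 = 0 := by
        have : d3 g = 0 := hd3g
        simp only [d3] at this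
        rw [this, eval_zero]
      have hE := hP u1 v1
      rw [hA, hB, hA2, hB2, hA3, hB3] at hE
      have hPe : Pexpr 1 (2*p2) 0 1 (2*q2) 0 = 768 * (p2^2*q2^2) * (p2 - q2) := by
        simp only [Pexpr]; ring
      rw [hPe] at hE
      have h768 : (768:ℝ) * (p2^2*q2^2) ≠ 0 :=
        mul_ne_zero (by norm_num) (mul_ne_zero (pow_ne_zero _ hp2) (pow_ne_zero _ hq2))
      have := (mul_eq_zero.mp hE).resolve_left h768
      linarith [sub_eq_zero.mp this]
    refine ⟨p2, -p1/(2*p2), -q1/(2*q2), f.coeff 0 - p1^2/(4*p2),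
      g.coeff 0 - q1^2/(4*q2), hp2, ?_, ?_⟩
    · intro u
      rw [quad_eval f hf2, ← hp1d, ← hp2d]
      field_simp
      ring
    · intro v
      rw [quad_eval g hg2, ← hq1d, ← hq2d, ← hpq]
      field_simp
      ring
  · intro hcase u v
    rw [jac_iff]
    rcases hcase with hf1 | hg1 | ⟨a, u₀, v₀, c₁, c₂, ha, hfe, hge⟩
    · have hA2 : derivative (derivative f) = 0 := by
        have hd : (derivative f).natDegree ≤ 0 := by
          have := natDegree_derivative_le f
          omega
        rw [eq_C_of_natDegree_le_zero hd, derivative_C]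
      have hA3 : derivative (derivative (derivative f)) = 0 := by
        rw [hA2]; simp
      rw [hA3, hA2]
      simp only [eval_zero, Pexpr]
      ring
    · have hB2 : derivative (derivative g) = 0 := by
        have hd : (derivative g).natDegree ≤ 0 := by
          have := natDegree_derivative_le g
          omega
        rw [eq_C_of_natDegree_le_zero hd, derivative_C]
      have hB3 : derivative (derivative (derivative g)) = 0 := by
        rw [hB2]; simp
      rw [hB3, hB2]
      simp only [eval_zero, Pexpr]
      ring
    · have hF : f = C a * X^2 + C (-(2*a*u₀)) * X + C (a*u₀^2+c₁) := by
        apply Polynomial.funext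
        intro x
        rw [hfe x]
        simp
        ring
      have hG : g = C a * X^2 + C (-(2*a*v₀)) * X + C (a*v₀^2+c₂) := by
        apply Polynomial.funext
        intro x
        rw [hge x]
        simp
        ring
      have hdf : derivative f = C (2*a) * X + C (-(2*a*u₀)) := by
        rw [hF]
        simp [derivative_X_pow, derivative_pow]
        ring
      have hdg : derivative g = C (2*a) * X + C (-(2*a*v₀)) := by
        rw [hG]
        simp [derivative_X_pow, derivative_pow]
        ring
      have hd2f : derivative (derivative f) = C (2*a) := by
        rw [hdf]; simp
      have hd2g : derivative (derivative g) = C (2*a) := by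
        rw [hdg]; simp
      have hd3f : derivative (derivative (derivative f)) = 0 := by
        rw [hd2f]; simp
      have hd3g : derivative (derivative (derivative g)) = 0 := by
        rw [hd2g]; simp
      rw [hd3f, hd3g, hd2f, hd2g]
      simp only [eval_zero, eval_C, Pexpr]
      ring
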